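/- arXiv:1901.08462 — 5 statements merged into one kernel-verified Lean document; each statement's English description precedes it below -/
import Mathlib

section
/- The bidual body of a convex body K reverses sign: (K^ω)^ω = −K, where K is a convex body in a symplectic plane containing the origin in its interior. -/
/-- The dual body of `K` with respect to a symplectic form `ω`. -/
def dualBody {X : Type*} [AddCommGroup X] [Module ℝ X]
    (ω : X →ₗ[ℝ] X →ₗ[ℝ] ℝ) (K : Set X) : Set X :=
  {x : X | ∀ y ∈ K, ω x y ≤ 1}

/-- The bidual body reverses the sign of the body: `(K^ω)^ω = -K`. -/
theorem stmt_7
    {X : Type*} [NormedAddCommGroup X] [NormedSpace ℝ X]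
    (hdim : Module.finrank ℝ X = 2)
    (ω : X →ₗ[ℝ] X →ₗ[ℝ] ℝ)
    (halt : ∀ x, ω x x = 0) (hnd : ∀ x, (∀ y, ω x y = 0) → x = 0)
    (K : Set X) (hKc : IsCompact K) (hKconv : Convex ℝ K) (hK0 : (0 : X) ∈ interior K) :
    dualBody ω (dualBody ω K) = -K := by
  have hfin : FiniteDimensional ℝ X := FiniteDimensional.of_finrank_eq_succ hdim
  have hskew : ∀ x y, ω x y = - ω y x := by
    intro x y
    have h := halt (x + y)
    simp only [map_add, LinearMap.add_apply, halt] at h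
    linarith
  have hinj : Function.Injective ω := by
    rw [← LinearMap.ker_eq_bot, LinearMap.ker_eq_bot']
    intro x hx
    exact hnd x fun y => by rw [hx]; rfl
  have hsurj : Function.Surjective ω := by
    have := Subspace.dual_finrank_eq (K := ℝ) (V := X)
    exact (LinearMap.injective_iff_surjective_of_finrank_eq_finrank this.symm).1 hinj
  ext z
  simp only [dualBody, Set.mem_setOf_eq, Set.mem_neg]
  constructor
  · intro hz
    by_contra hnz
    obtain ⟨f, u, hfa, hfz⟩ := geometric_hahn_banach_closed_point hKconv hKc.isClosed hnz
    have hu : (0 : ℝ) < u := by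
      have := hfa 0 (interior_subset hK0)
      simpa using this
    obtain ⟨y, hy⟩ := hsurj (u⁻¹ • (f : X →ₗ[ℝ] ℝ))
    have hyA : ∀ k ∈ K, ω y k ≤ 1 := by
      intro k hk
      rw [hy]
      simp only [LinearMap.smul_apply, LinearMap.coe_coe, smul_eq_mul]
      rw [inv_mul_le_iff₀ hu, mul_one]
      exact (hfa k hk).le
    have h1 := hz y hyA
    have h2 : ω z y = -(u⁻¹ * f z) := by
      rw [hskew, hy]; simp
    have h3 : u < f (-z) := hfz
    rw [map_neg] at h3
    rw [h2] at h1
    nlinarith [mul_inv_cancel₀ hu.ne', inv_pos.2 hu]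
  · intro hz y hy
    rw [hskew]
    have := hy (-z) hz
    rw [map_neg] at this
    linarith
end

section
/- In a two-dimensional gauge space (X, γ) with symplectic form ω, if x ⊣ y and ω(y,x) > 0, then y ⊣_ω x, where ⊣_ω denotes orthogonality with respect to the dual gauge γ_ω. -/
open Filter Topology Set


/-- Birkhoff-type orthogonality for a gauge `γ`. -/
def BirkhoffOrth {X : Type*} [AddCommGroup X] [Module ℝ X]
    (γ : X → ℝ) (x y : X) : Prop :=
  ∀ t : ℝ, γ x ≤ γ (x + t • y)

/-- If `x ⊣ y` and `ω(y,x) > 0`, then `y ⊣_ω x` in the dual gauge. -/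
theorem stmt_9
    {X : Type*} [NormedAddCommGroup X] [NormedSpace ℝ X]
    (hdim : Module.finrank ℝ X = 2)
    (ω : X →ₗ[ℝ] X →ₗ[ℝ] ℝ)
    (halt : ∀ x, ω x x = 0) (hnd : ∀ x, (∀ y, ω x y = 0) → x = 0)
    (K : Set X) (hKc : IsCompact K) (hKconv : Convex ℝ K) (hK0 : (0 : X) ∈ interior K)
    (x y : X) (hxy : BirkhoffOrth (gauge K) x y) (hpos : 0 < ω y x) :
    BirkhoffOrth (gauge (dualBody ω K)) y x := by
  have hfd : FiniteDimensional ℝ X := Module.finite_of_finrank_eq_succ hdim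
  have hy0 : y ≠ 0 := by rintro rfl; simp at hpos
  have hx0 : x ≠ 0 := by
    rintro rfl; rw [map_zero] at hpos; exact lt_irrefl 0 hpos
  have hKnhds : K ∈ 𝓝 (0:X) := mem_interior_iff_mem_nhds.mp hK0
  have habs : Absorbent ℝ K := absorbent_nhds_zero hKnhds
  have hbdd : Bornology.IsVonNBounded ℝ K :=
    NormedSpace.isVonNBounded_of_isBounded _ hKc.isBounded
  have hγx : 0 < gauge K x := (gauge_pos habs hbdd).mpr hx0
  -- {x, y} spans X
  have hli : LinearIndependent ℝ ![x, y] := by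
    rw [LinearIndependent.pair_iff]
    intro s t hst
    have h1 : s * ω y x = 0 := by
      have := congrArg (ω y) hst
      simpa [halt] using this
    have hs : s = 0 := by
      rcases mul_eq_zero.mp h1 with h | h
      · exact h
      · exact absurd h (ne_of_gt hpos)
    subst hs
    simp only [zero_smul, zero_add] at hst
    rcases smul_eq_zero.mp hst with h | h
    · exact ⟨rfl, h⟩
    · exact absurd h hy0
  have hspan : ∀ z : X, ∃ a b : ℝ, a • x + b • y = z := by
    intro z
    have htop : Submodule.span ℝ (Set.range ![x, y]) = ⊤ :=
      hli.span_eq_top_of_card_eq_finrank (by simp [hdim])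
    have : z ∈ Submodule.span ℝ ({x, y} : Set X) := by
      have : (Set.range ![x, y]) = {x, y} := by
        simp [Matrix.range_cons, Matrix.range_empty, Set.pair_comm]
      rw [← this, htop]; trivial
    exact Submodule.mem_span_pair.mp this
  -- key support inequality
  have hkey : ∀ a b : ℝ, gauge K x * a ≤ gauge K (a • x + b • y) := by
    intro a b
    rcases le_or_gt a 0 with ha | ha
    · exact le_trans (mul_nonpos_of_nonneg_of_nonpos (gauge_nonneg x) ha) (gauge_nonneg _)
    · have h1 : a • x + b • y = a • (x + (b / a) • y) := by
        rw [smul_add, smul_smul, mul_div_cancel₀ _ (ne_of_gt ha)]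
      rw [h1, gauge_smul_of_nonneg ha.le, smul_eq_mul, mul_comm]
      exact mul_le_mul_of_nonneg_right (hxy (b / a)) ha.le |>.trans_eq (mul_comm _ _) |>.trans_eq' (mul_comm _ _)
  -- coefficient extraction
  have hcoef : ∀ a b : ℝ, ω y (a • x + b • y) = a * ω y x := by
    intro a b; simp [halt, mul_comm]
  set D := dualBody ω K with hD
  set c : ℝ := gauge K x / ω y x with hc
  have hcpos : 0 < c := div_pos hγx hpos
  -- upper bound : c • y ∈ D
  have hmem : c • y ∈ D := by
    intro w hw
    obtain ⟨a, b, rfl⟩ := hspan w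
    have : ω (c • y) (a • x + b • y) = gauge K x * a := by
      rw [map_smul, LinearMap.smul_apply, hcoef, smul_eq_mul, hc]
      field_simp
    rw [this]
    exact le_trans (hkey a b) (gauge_le_one_of_mem hw)
  have hup : gauge D y ≤ ω y x / gauge K x := by
    have h1 : gauge D (c • y) ≤ 1 := gauge_le_one_of_mem hmem
    rw [gauge_smul_of_nonneg hcpos.le, smul_eq_mul] at h1
    have h2 : gauge D y ≤ 1 / c := (le_div_iff₀ hcpos).mpr (by rw [mul_comm]; exact h1)
    rwa [hc, one_div_div] at h2
  -- lower bound
  intro t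
  set w₀ : X := (gauge K x)⁻¹ • x with hw₀
  have hw₀K : w₀ ∈ K := by
    have h1 : gauge K w₀ ≤ 1 := by
      rw [hw₀, gauge_smul_of_nonneg (inv_nonneg.mpr hγx.le), smul_eq_mul,
        inv_mul_cancel₀ (ne_of_gt hγx)]
    have := (gauge_le_one_iff_mem_closure hKconv hKnhds).mp h1
    rwa [hKc.isClosed.closure_eq] at this
  have hle : ∀ z : X, ω z w₀ ≤ gauge D z := by
    intro z
    rw [gauge_def]
    apply le_csInf
    · -- nonempty
      have hcont : Continuous (ω z) := (ω z).continuous_of_finiteDimensional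
      obtain ⟨M, hM⟩ := (hKc.image hcont).bddAbove
      refine ⟨max M 1, ⟨Set.mem_Ioi.mpr (lt_max_of_lt_right one_pos), ?_⟩⟩
      rw [Set.mem_smul_set_iff_inv_smul_mem₀ (by positivity)]
      intro w hw
      rw [map_smul, LinearMap.smul_apply, smul_eq_mul]
      have h2 : ω z w ≤ max M 1 :=
        le_trans (hM (Set.mem_image_of_mem _ hw)) (le_max_left _ _)
      have h3 : (0:ℝ) < max M 1 := lt_max_of_lt_right one_pos
      calc (max M 1)⁻¹ * ω z w ≤ (max M 1)⁻¹ * max M 1 :=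
            mul_le_mul_of_nonneg_left h2 (inv_nonneg.mpr h3.le)
        _ = 1 := inv_mul_cancel₀ (ne_of_gt h3)
    · rintro r ⟨hr, hzr⟩
      obtain ⟨u, hu, rfl⟩ := hzr
      have h5 : ω u w₀ ≤ 1 := hu w₀ hw₀K
      calc ω (r • u) w₀ = r * ω u w₀ := by simp
        _ ≤ r * 1 := mul_le_mul_of_nonneg_left h5 (le_of_lt hr)
        _ = r := mul_one r
  have hval : ω (y + t • x) w₀ = ω y x / gauge K x := by
    simp [hw₀, halt, smul_eq_mul, div_eq_inv_mul]
  calc gauge D y ≤ ω y x / gauge K x := hup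
    _ = ω (y + t • x) w₀ := hval.symm
    _ ≤ gauge D (y + t • x) := hle _
end

section
/- Let K be a smooth convex body in the plane containing the origin in its interior. Then there exist nonzero vectors x, y such that both x ⊣ y and −x ⊣ y, where ⊣ is the Birkhoff-type orthogonality of the gauge with unit disk K. Equivalently, some chord of K through the origin joins two boundary points at which K has parallel supporting lines. -/
/-- The line through `p` with direction `v` supports `K`. -/
def SupportsAt {X : Type*} [AddCommGroup X] [Module ℝ X]
    (K : Set X) (p v : X) : Prop :=
  ∃ f : X →ₗ[ℝ] ℝ, f ≠ 0 ∧ f v = 0 ∧ ∀ z ∈ K, f z ≤ f p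

/-- `K` is a smooth convex body: exactly one supporting line at each boundary point. -/
def SmoothBody {X : Type*} [NormedAddCommGroup X] [NormedSpace ℝ X]
    (K : Set X) : Prop :=
  ∀ p ∈ frontier K, ∀ v w : X, v ≠ 0 → w ≠ 0 →
    SupportsAt K p v → SupportsAt K p w → ∃ c : ℝ, w = c • v

open Set Pointwise

section Aux

variable {X : Type*} [NormedAddCommGroup X] [NormedSpace ℝ X]

/-- In a 2-dimensional space, a nonzero functional has a nonzero kernel vector,
and its kernel is the span of any such vector. -/
lemma ker_finrank_one (hdim : Module.finrank ℝ X = 2) (f : X →ₗ[ℝ] ℝ) (hf : f ≠ 0) :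
    Module.finrank ℝ (LinearMap.ker f) = 1 := by
  have : FiniteDimensional ℝ X := Module.finite_of_finrank_eq_succ hdim
  obtain ⟨x, hx⟩ : ∃ x, f x ≠ 0 := by
    by_contra h; push_neg at h; exact hf (LinearMap.ext fun x => by simp [h x])
  have hrange : LinearMap.range f = ⊤ := by
    rw [LinearMap.range_eq_top]
    intro y
    exact ⟨(y / f x) • x, by simp [div_mul_cancel₀ _ hx]⟩
  have h1 : Module.finrank ℝ (LinearMap.range f) = 1 := by
    rw [hrange, finrank_top, Module.finrank_self]
  have h2 := f.finrank_range_add_finrank_ker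
  rw [hdim, h1] at h2
  omega

lemma exists_mem_ker (hdim : Module.finrank ℝ X = 2) (f : X →ₗ[ℝ] ℝ) (hf : f ≠ 0) :
    ∃ v : X, v ≠ 0 ∧ f v = 0 := by
  have : FiniteDimensional ℝ X := Module.finite_of_finrank_eq_succ hdim
  have h1 := ker_finrank_one hdim f hf
  have : LinearMap.ker f ≠ ⊥ := by
    intro h; rw [h] at h1; simp at h1
  obtain ⟨v, hv1, hv2⟩ := Submodule.exists_mem_ne_zero_of_ne_bot this
  exact ⟨v, hv2, hv1⟩

lemma ker_eq_span (hdim : Module.finrank ℝ X = 2) (f : X →ₗ[ℝ] ℝ) (hf : f ≠ 0)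
    {v : X} (hv : v ≠ 0) (hfv : f v = 0) :
    LinearMap.ker f = Submodule.span ℝ {v} := by
  have : FiniteDimensional ℝ X := Module.finite_of_finrank_eq_succ hdim
  refine (Submodule.eq_of_le_of_finrank_le ?_ ?_).symm
  · rw [Submodule.span_le, Set.singleton_subset_iff]; exact hfv
  · rw [ker_finrank_one hdim f hf, finrank_span_singleton hv]

/-- Existence of subgradients of the gauge. -/
lemma subgrad_exists (K : Set X) (hKconv : Convex ℝ K) (habs : Absorbent ℝ K) (z : X) :
    ∃ f : X →ₗ[ℝ] ℝ, (∀ w, f w ≤ gauge K w) ∧ f z = gauge K z := by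
  by_cases hz : z = 0
  · exact ⟨0, fun w => gauge_nonneg w, by simp [hz]⟩
  · set f0 : X →ₗ.[ℝ] ℝ := LinearPMap.mkSpanSingleton z (gauge K z) hz with hf0
    have hdom : ∀ x : f0.domain, f0 x ≤ gauge K x := by
      rintro ⟨x, hx⟩
      have hx' : x ∈ Submodule.span ℝ {z} := hx
      obtain ⟨c, rfl⟩ := Submodule.mem_span_singleton.mp hx'
      have hval : f0 ⟨c • z, hx⟩ = c • gauge K z :=
        LinearPMap.mkSpanSingleton'_apply _ _ _ c hx
      rw [hval]
      rcases le_or_gt 0 c with h | h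
      · rw [gauge_smul_of_nonneg h]
      · have : c • gauge K z ≤ 0 := smul_nonpos_of_nonpos_of_nonneg h.le (gauge_nonneg z)
        exact this.trans (gauge_nonneg _)
    obtain ⟨g, hg1, hg2⟩ := exists_extension_of_le_sublinear f0 (gauge K)
      (fun c hc => gauge_smul_of_nonneg hc.le) (gauge_add_le hKconv habs) hdom
    refine ⟨g, hg2, ?_⟩
    have h2 := hg1 ⟨z, Submodule.mem_span_singleton_self z⟩
    have hval : f0 ⟨z, Submodule.mem_span_singleton_self z⟩ = gauge K z :=
      LinearPMap.mkSpanSingleton'_apply_self _ _ _ _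
    rw [h2, hval]

end Aux

/-- If the gauge's subgradient at a unit-gauge point `z` is unique and equals `f`,
and `f y > 0`, then moving from `z` in direction `-y` decreases the gauge. -/
lemma exists_gauge_lt {X : Type*} [NormedAddCommGroup X] [NormedSpace ℝ X]
    (K : Set X) (hKconv : Convex ℝ K) (habs : Absorbent ℝ K)
    (z : X) (hz : gauge K z = 1)
    (f : X →ₗ[ℝ] ℝ) (hf : ∀ w, f w ≤ gauge K w) (hfz : f z = 1)
    (huniq : ∀ h : X →ₗ[ℝ] ℝ, (∀ w, h w ≤ gauge K w) → h z = 1 → h = f)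
    (y : X) (hy : 0 < f y) :
    ∃ t : ℝ, 0 < t ∧ gauge K (z - t • y) < 1 := by
  by_contra hcon
  push_neg at hcon
  set v₀ : X := -y with hv₀def
  have hv₀ : v₀ ≠ 0 := by
    intro h
    rw [hv₀def, neg_eq_zero] at h
    rw [h, map_zero] at hy
    exact lt_irrefl 0 hy
  set Q : X → ℝ → ℝ := fun v t => (gauge K (z + t • v) - 1) / t with hQ
  have hQmono : ∀ v : X, ∀ s t : ℝ, 0 < s → s ≤ t → Q v s ≤ Q v t := by
    intro v s t hs hst
    have ht : 0 < t := hs.trans_le hst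
    have hstt : s / t ≤ 1 := (div_le_one ht).mpr hst
    have h1 : z + s • v = (s / t) • (z + t • v) + (1 - s / t) • z := by
      rw [smul_add, smul_smul, div_mul_cancel₀ _ ht.ne']
      module
    have key : gauge K (z + s • v) ≤ (s / t) * gauge K (z + t • v) + (1 - s / t) := by
      rw [h1]
      refine (gauge_add_le hKconv habs _ _).trans ?_
      rw [gauge_smul_of_nonneg (by positivity), gauge_smul_of_nonneg (by linarith), hz,
        smul_eq_mul, smul_eq_mul, mul_one]
    rw [hQ]
    dsimp only
    rw [div_le_div_iff₀ hs ht]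
    have hmul := mul_le_mul_of_nonneg_left key ht.le
    have hexp : t * (s / t * gauge K (z + t • v) + (1 - s / t))
        = s * gauge K (z + t • v) + (t - s) := by field_simp
    linarith [hmul, hexp.le, hexp.ge]
  have hbddQ : ∀ v : X, ∀ t : ℝ, 0 < t → f v ≤ Q v t := by
    intro v t ht
    have h1 : 1 + t * f v ≤ gauge K (z + t • v) := by
      calc 1 + t * f v = f (z + t • v) := by rw [map_add, map_smul, hfz, smul_eq_mul]
        _ ≤ _ := hf _
    rw [hQ]
    dsimp only
    rw [le_div_iff₀ ht]
    nlinarith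
  set N : X → ℝ := fun v => sInf (Q v '' Ioi 0) with hN
  have hne : ∀ v : X, (Q v '' Ioi 0).Nonempty := fun v => ⟨Q v 1, ⟨1, by norm_num, rfl⟩⟩
  have hbb : ∀ v : X, BddBelow (Q v '' Ioi 0) := by
    intro v
    refine ⟨f v, ?_⟩
    rintro r ⟨t, ht, rfl⟩
    exact hbddQ v t ht
  have hNle : ∀ v : X, ∀ t : ℝ, 0 < t → N v ≤ Q v t := fun v t ht =>
    csInf_le (hbb v) ⟨t, ht, rfl⟩
  have hNge : ∀ v : X, f v ≤ N v := by
    intro v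
    refine le_csInf (hne v) ?_
    rintro r ⟨t, ht, rfl⟩
    exact hbddQ v t ht
  have hN0 : N 0 = 0 := by
    have h1 : Q 0 '' Ioi 0 = {0} := by
      ext r
      constructor
      · rintro ⟨t, ht, rfl⟩
        simp [hQ, hz]
      · rintro rfl
        exact ⟨1, by norm_num, by simp [hQ, hz]⟩
    rw [hN]
    dsimp only
    rw [h1, csInf_singleton]
  have hNadd : ∀ a b : X, N (a + b) ≤ N a + N b := by
    intro a b
    have key : ∀ u : ℝ, 0 < u → Q (a + b) u ≤ Q a (2 * u) + Q b (2 * u) := by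
      intro u hu
      have h2u : (0 : ℝ) < 2 * u := by linarith
      have h1 : z + u • (a + b) =
          (1 / 2 : ℝ) • (z + (2 * u) • a) + (1 / 2 : ℝ) • (z + (2 * u) • b) := by
        module
      have h2 : gauge K (z + u • (a + b)) ≤
          (1 / 2) * gauge K (z + (2 * u) • a) + (1 / 2) * gauge K (z + (2 * u) • b) := by
        rw [h1]
        refine (gauge_add_le hKconv habs _ _).trans ?_
        rw [gauge_smul_of_nonneg (by norm_num : (0:ℝ) ≤ 1/2),
          gauge_smul_of_nonneg (by norm_num : (0:ℝ) ≤ 1/2), smul_eq_mul, smul_eq_mul]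
      rw [hQ]
      dsimp only
      rw [div_add_div _ _ h2u.ne' h2u.ne', div_le_div_iff₀ hu (by positivity)]
      nlinarith
    have key2 : ∀ s t : ℝ, 0 < s → 0 < t → N (a + b) ≤ Q a s + Q b t := by
      intro s t hs ht
      have hm : 0 < min s t / 2 := by positivity
      calc N (a + b) ≤ Q (a + b) (min s t / 2) := hNle _ _ hm
        _ ≤ Q a (2 * (min s t / 2)) + Q b (2 * (min s t / 2)) := key _ hm
        _ = Q a (min s t) + Q b (min s t) := by ring_nf
        _ ≤ Q a s + Q b t :=
          add_le_add (hQmono a _ _ (by positivity) (min_le_left s t))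
            (hQmono b _ _ (by positivity) (min_le_right s t))
    have key3 : ∀ s : ℝ, 0 < s → N (a + b) - Q a s ≤ N b := by
      intro s hs
      refine le_csInf (hne b) ?_
      rintro r ⟨t, ht, rfl⟩
      linarith [key2 s t hs ht]
    have key4 : N (a + b) - N b ≤ N a := by
      refine le_csInf (hne a) ?_
      rintro r ⟨s, hs, rfl⟩
      linarith [key3 s hs]
    linarith
  have hNhom : ∀ c : ℝ, 0 < c → ∀ v : X, N (c • v) = c * N v := by
    intro c hc v
    have hq : ∀ t : ℝ, 0 < t → Q (c • v) t = c * Q v (c * t) := by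
      intro t ht
      rw [hQ]
      dsimp only
      rw [smul_smul, show t * c = c * t by ring]
      field_simp
    have him : Q (c • v) '' Ioi 0 = (fun r => c * r) '' (Q v '' Ioi 0) := by
      ext r
      constructor
      · rintro ⟨t, ht, rfl⟩
        rw [Set.mem_Ioi] at ht
        exact ⟨Q v (c * t), ⟨c * t, Set.mem_Ioi.mpr (mul_pos hc ht), rfl⟩, (hq t ht).symm⟩
      · rintro ⟨_, ⟨t, ht, rfl⟩, rfl⟩
        rw [Set.mem_Ioi] at ht
        refine ⟨c⁻¹ * t, Set.mem_Ioi.mpr (by positivity), ?_⟩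
        rw [hq _ (by positivity), ← mul_assoc, mul_inv_cancel₀ hc.ne', one_mul]
    have him2 : (fun r => c * r) '' (Q v '' Ioi 0) = c • (Q v '' Ioi 0) := by
      ext r
      simp [Set.mem_smul_set, smul_eq_mul]
    rw [hN]
    dsimp only
    rw [him, him2, Real.sInf_smul_of_nonneg hc.le, smul_eq_mul]
  set f0 : X →ₗ.[ℝ] ℝ := LinearPMap.mkSpanSingleton v₀ (N v₀) hv₀ with hf0def
  have hdom : ∀ x : f0.domain, f0 x ≤ N x := by
    rintro ⟨x, hx⟩
    have hx' : x ∈ Submodule.span ℝ {v₀} := hx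
    obtain ⟨c, rfl⟩ := Submodule.mem_span_singleton.mp hx'
    have hval : f0 ⟨c • v₀, hx⟩ = c • N v₀ := LinearPMap.mkSpanSingleton'_apply _ _ _ c hx
    rw [hval, smul_eq_mul]
    show c * N v₀ ≤ N (c • v₀)
    rcases lt_trichotomy c 0 with hlt | rfl | hgt
    · have h1 : c • v₀ = (-c) • (-v₀) := by module
      rw [h1, hNhom (-c) (by linarith)]
      have h2 := hNadd v₀ (-v₀)
      rw [show v₀ + -v₀ = 0 by abel, hN0] at h2
      nlinarith
    · simp [hN0]
    · rw [hNhom c hgt]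
  obtain ⟨h, hh1, hh2⟩ := exists_extension_of_le_sublinear f0 N hNhom hNadd hdom
  have hhle : ∀ x : X, h x ≤ gauge K (z + x) - 1 := by
    intro x
    have := hNle x 1 one_pos
    have hq1 : Q x 1 = gauge K (z + x) - 1 := by rw [hQ]; simp
    linarith [hh2 x, this, hq1.le, hq1.ge]
  have hhz : h z = 1 := by
    have h1 : h z ≤ 1 := by
      have := hhle z
      have : gauge K (z + z) = 2 := by
        rw [show z + z = (2 : ℝ) • z by module, gauge_smul_of_nonneg (by norm_num : (0:ℝ) ≤ 2),
          hz, smul_eq_mul, mul_one]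
      linarith [hhle z]
    have h2 : h (-z) ≤ -1 := by
      have hq : Q (-z) (1 / 2) = -1 := by
        rw [hQ]
        dsimp only
        rw [show z + (1 / 2 : ℝ) • (-z) = (1 / 2 : ℝ) • z by module,
          gauge_smul_of_nonneg (by norm_num : (0:ℝ) ≤ 1/2), hz, smul_eq_mul, mul_one]
        norm_num
      have := (hh2 (-z)).trans ((hNle (-z) (1 / 2) (by norm_num)).trans_eq hq)
      exact this
    have h3 : h (-z) = -h z := by rw [map_neg]
    linarith
  have hhga : ∀ w : X, h w ≤ gauge K w := by
    intro w
    have h1 := hhle (w - z)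
    rw [map_sub, hhz, show z + (w - z) = w by abel] at h1
    linarith
  have heq : h = f := huniq h hhga hhz
  have hhv₀ : h v₀ = N v₀ := by
    have h2 := hh1 ⟨v₀, Submodule.mem_span_singleton_self v₀⟩
    have hval : f0 ⟨v₀, Submodule.mem_span_singleton_self v₀⟩ = N v₀ :=
      LinearPMap.mkSpanSingleton'_apply_self _ _ _ _
    rw [h2, hval]
  have hge : 0 ≤ N v₀ := by
    refine le_csInf (hne v₀) ?_
    rintro r ⟨t, ht, rfl⟩
    have hc := hcon t ht
    rw [hQ]
    dsimp only
    rw [show z + t • v₀ = z - t • y by rw [hv₀def]; module]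
    exact div_nonneg (by linarith) ht.le
  have hfv₀ : f v₀ = -f y := by rw [hv₀def, map_neg]
  rw [heq, hfv₀] at hhv₀
  linarith


/-- In a smooth gauge plane there exist nonzero vectors `x, y` with
`x ⊣ y` and `-x ⊣ y`. -/
theorem stmt_13
    {X : Type*} [NormedAddCommGroup X] [NormedSpace ℝ X]
    (hdim : Module.finrank ℝ X = 2)
    (K : Set X) (hKc : IsCompact K) (hKconv : Convex ℝ K) (hK0 : (0 : X) ∈ interior K)
    (hsm : SmoothBody K) :
    ∃ x y : X, x ≠ 0 ∧ y ≠ 0 ∧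
      BirkhoffOrth (gauge K) x y ∧ BirkhoffOrth (gauge K) (-x) y := by
  classical
  have hKn : K ∈ nhds (0 : X) := mem_interior_iff_mem_nhds.mp hK0
  have habs : Absorbent ℝ K := absorbent_nhds_zero hKn
  have hbdd : Bornology.IsVonNBounded ℝ K :=
    NormedSpace.isVonNBounded_of_isBounded _ hKc.isBounded
  have hpos : ∀ x : X, x ≠ 0 → 0 < gauge K x := fun x hx => (gauge_pos habs hbdd).mpr hx
  have hcont : Continuous (gauge K) := continuous_gauge hKconv hKn
  -- uniqueness of normalized subgradients at unit-gauge points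
  have huniq : ∀ z : X, gauge K z = 1 → ∀ f g : X →ₗ[ℝ] ℝ,
      (∀ w, f w ≤ gauge K w) → f z = 1 → (∀ w, g w ≤ gauge K w) → g z = 1 → g = f := by
    intro z hz f g hfle hfz hgle hgz
    have hzf : z ∈ frontier K := (gauge_eq_one_iff_mem_frontier hKconv hKn).mp hz
    have hf0 : f ≠ 0 := fun h => by simp [h] at hfz
    have hg0 : g ≠ 0 := fun h => by simp [h] at hgz
    obtain ⟨v, hv, hfv⟩ := exists_mem_ker hdim f hf0
    obtain ⟨w, hw, hgw⟩ := exists_mem_ker hdim g hg0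
    have hsupf : SupportsAt K z v :=
      ⟨f, hf0, hfv, fun u hu => by rw [hfz]; exact (hfle u).trans (gauge_le_one_of_mem hu)⟩
    have hsupg : SupportsAt K z w :=
      ⟨g, hg0, hgw, fun u hu => by rw [hgz]; exact (hgle u).trans (gauge_le_one_of_mem hu)⟩
    obtain ⟨c, hc⟩ := hsm z hzf v w hv hw hsupf hsupg
    have hc0 : c ≠ 0 := fun h => hw (by rw [hc, h, zero_smul])
    have hgv : g v = 0 := by
      have hveq : v = c⁻¹ • w := by rw [hc, smul_smul, inv_mul_cancel₀ hc0, one_smul]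
      rw [hveq, map_smul, hgw, smul_zero]
    have hkerf : LinearMap.ker f = Submodule.span ℝ {v} := ker_eq_span hdim f hf0 hv hfv
    ext x
    have hx : x - f x • z ∈ LinearMap.ker f := by
      simp [LinearMap.mem_ker, map_sub, map_smul, hfz]
    rw [hkerf] at hx
    obtain ⟨a, ha⟩ := Submodule.mem_span_singleton.mp hx
    have hxeq : x = f x • z + a • v := by rw [ha]; abel
    rw [hxeq]
    simp [map_add, map_smul, hgz, hgv, hfz, hfv]
  -- the gauge-unit sphere is compact and nonempty
  set S : Set X := gauge K ⁻¹' {1} with hS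
  have hSK : S ⊆ K := by
    intro x hx
    have hx1 : gauge K x ≤ 1 := le_of_eq hx
    have := (gauge_le_one_iff_mem_closure hKconv hKn).mp hx1
    rwa [hKc.isClosed.closure_eq] at this
  have hScl : IsClosed S := isClosed_singleton.preimage hcont
  have hScomp : IsCompact S := IsCompact.of_isClosed_subset hKc hScl hSK
  have hSne : S.Nonempty := by
    have hnt : Nontrivial X := by
      have : 0 < Module.finrank ℝ X := by omega
      exact Module.nontrivial_of_finrank_pos this
    obtain ⟨x, hx⟩ := exists_ne (0 : X)
    refine ⟨(gauge K x)⁻¹ • x, ?_⟩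
    have hgx := hpos x hx
    rw [hS, mem_preimage, gauge_smul_of_nonneg (inv_nonneg.mpr (gauge_nonneg x)),
      smul_eq_mul, inv_mul_cancel₀ hgx.ne']
    rfl
  -- minimize gauge K (-x) over S
  obtain ⟨p, hpS, hpmin⟩ := hScomp.exists_isMinOn hSne
    ((hcont.comp continuous_neg).continuousOn)
  have hp1 : gauge K p = 1 := hpS
  have hp0 : p ≠ 0 := by
    intro h
    rw [h, gauge_zero] at hp1
    norm_num at hp1
  set lam : ℝ := gauge K (-p) with hlamdef
  have hlam : 0 < lam := hpos _ (neg_ne_zero.mpr hp0)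
  -- homogeneous form of minimality
  have hmin : ∀ x : X, lam * gauge K x ≤ gauge K (-x) := by
    intro x
    rcases eq_or_ne x 0 with rfl | hx
    · simp
    · have hgx := hpos x hx
      have hx' : (gauge K x)⁻¹ • x ∈ S := by
        rw [hS, mem_preimage, gauge_smul_of_nonneg (inv_nonneg.mpr (gauge_nonneg x)),
          smul_eq_mul, inv_mul_cancel₀ hgx.ne']
        rfl
      have h1 := hpmin hx'
      have h2 : gauge K (-((gauge K x)⁻¹ • x)) = (gauge K x)⁻¹ * gauge K (-x) := by
        rw [← smul_neg, gauge_smul_of_nonneg (inv_nonneg.mpr (gauge_nonneg x)), smul_eq_mul]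
      have h1' : lam ≤ (gauge K x)⁻¹ * gauge K (-x) := by rw [← h2]; exact h1
      calc lam * gauge K x ≤ ((gauge K x)⁻¹ * gauge K (-x)) * gauge K x := by
            exact mul_le_mul_of_nonneg_right h1' (gauge_nonneg x)
        _ = gauge K (-x) := by field_simp
  set q : X := lam⁻¹ • (-p) with hqdef
  have hq1 : gauge K q = 1 := by
    rw [hqdef, gauge_smul_of_nonneg (inv_nonneg.mpr hlam.le), smul_eq_mul, ← hlamdef,
      inv_mul_cancel₀ hlam.ne']
  obtain ⟨f, hfle, hfp⟩ := subgrad_exists K hKconv habs p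
  rw [hp1] at hfp
  obtain ⟨g, hgle, hgq⟩ := subgrad_exists K hKconv habs q
  rw [hq1] at hgq
  have hf0 : f ≠ 0 := fun h => by simp [h] at hfp
  obtain ⟨v, hv, hfv⟩ := exists_mem_ker hdim f hf0
  have hlamq : lam • q = -p := by
    rw [hqdef, smul_smul, mul_inv_cancel₀ hlam.ne', one_smul]
  -- key claim: g v = 0
  have hgv : g v = 0 := by
    by_contra hne
    obtain ⟨y, hfy, hgy⟩ : ∃ y : X, f y = 0 ∧ 0 < g y := by
      rcases lt_or_gt_of_ne hne with hlt | hgt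
      · exact ⟨-v, by rw [map_neg, hfv, neg_zero], by rw [map_neg]; linarith⟩
      · exact ⟨v, hfv, hgt⟩
    obtain ⟨t, ht, hltq⟩ := exists_gauge_lt K hKconv habs q hq1 g hgle hgq
      (fun h hh1 hh2 => huniq q hq1 g h hgle hgq hh1 hh2) y hgy
    have h1 : -(p + (lam * t) • y) = lam • (q - t • y) := by
      rw [smul_sub, hlamq, smul_smul]
      module
    have h2 : gauge K (-(p + (lam * t) • y)) = lam * gauge K (q - t • y) := by
      rw [h1, gauge_smul_of_nonneg hlam.le, smul_eq_mul]
    have h3 : 1 ≤ gauge K (p + (lam * t) • y) := by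
      calc (1 : ℝ) = f (p + (lam * t) • y) := by
            rw [map_add, map_smul, hfp, hfy, smul_eq_mul, mul_zero, add_zero]
        _ ≤ _ := hfle _
    have h4 := hmin (p + (lam * t) • y)
    rw [h2] at h4
    nlinarith
  refine ⟨p, v, hp0, hv, ?_, ?_⟩
  · intro t
    have h1 : (1 : ℝ) = f (p + t • v) := by
      rw [map_add, map_smul, hfp, hfv, smul_eq_mul, mul_zero, add_zero]
    rw [hp1]
    exact h1.le.trans (hfle _)
  · intro t
    have h1 : -p + t • v = lam • (q + (lam⁻¹ * t) • v) := by
      rw [smul_add, hlamq, smul_smul, ← mul_assoc, mul_inv_cancel₀ hlam.ne', one_mul]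
    have h2 : (1 : ℝ) = g (q + (lam⁻¹ * t) • v) := by
      rw [map_add, hgq, map_smul, hgv, smul_eq_mul, mul_zero, add_zero]
    have h3 : 1 ≤ gauge K (q + (lam⁻¹ * t) • v) := h2.le.trans (hgle _)
    rw [h1, gauge_smul_of_nonneg hlam.le, smul_eq_mul, ← hlamdef]
    nlinarith
end

section
/- Let (X, γ) be a strictly convex gauge plane. Then there exist nonzero vectors x, y ∈ X such that x ⊣ y and −x ⊣ y, where ⊣ denotes the orthogonality relation γ(u) ≤ γ(u + tv) for all t ∈ ℝ. -/
open Real Set Filter Topology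

set_option maxHeartbeats 1000000

lemma birkhoffOrth_smul {X : Type*} [AddCommGroup X] [Module ℝ X] [TopologicalSpace X]
    {K : Set X} {z y : X} {s : ℝ} (hs : 0 < s)
    (h : BirkhoffOrth (gauge K) z y) : BirkhoffOrth (gauge K) (s • z) y := by
  intro t
  have h1 : s • z + t • y = s • (z + (t / s) • y) := by
    rw [smul_add, smul_smul]
    congr 2
    field_simp
  rw [h1, gauge_smul_of_nonneg hs.le, gauge_smul_of_nonneg hs.le, smul_eq_mul, smul_eq_mul]
  exact mul_le_mul_of_nonneg_left (h (t / s)) hs.le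

/-- In a strictly convex gauge plane there exist nonzero vectors `x, y` with
`x ⊣ y` and `-x ⊣ y`. -/
theorem stmt_18
    {X : Type*} [NormedAddCommGroup X] [NormedSpace ℝ X]
    (hdim : Module.finrank ℝ X = 2)
    (K : Set X) (hKc : IsCompact K) (hKconv : Convex ℝ K)
    (hK0 : (0 : X) ∈ interior K) (hKsc : StrictConvex ℝ K) :
    ∃ x y : X, x ≠ 0 ∧ y ≠ 0 ∧
      BirkhoffOrth (gauge K) x y ∧ BirkhoffOrth (gauge K) (-x) y := by
  haveI : FiniteDimensional ℝ X := FiniteDimensional.of_finrank_pos (by omega)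
  set b : Module.Basis (Fin 2) ℝ X := Module.finBasisOfFinrankEq ℝ X hdim with hb
  -- coordinate functionals
  set φ : Fin 2 → X →ₗ[ℝ] ℝ := fun i => b.coord i with hφ
  have hφcont : ∀ i, Continuous (φ i) := fun i => (φ i).continuous_of_finiteDimensional
  have hφb : ∀ i j, φ i (b j) = if i = j then 1 else 0 := by
    intro i j
    simp [hφ, Module.Basis.coord_apply, Module.Basis.repr_self, Finsupp.single_apply, eq_comm]
  -- the family of functionals
  set f : ℝ → X →ₗ[ℝ] ℝ := fun θ => cos θ • φ 0 + sin θ • φ 1 with hf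
  have hfapp : ∀ θ z, f θ z = cos θ * φ 0 z + sin θ * φ 1 z := by
    intro θ z; simp [hf]
  have hfcont : ∀ θ, Continuous (f θ) := fun θ => (f θ).continuous_of_finiteDimensional
  -- the "tangent" vectors
  set u : ℝ → X := fun θ => cos θ • b 0 + sin θ • b 1 with hu
  set y : ℝ → X := fun θ => (-sin θ) • b 0 + cos θ • b 1 with hy
  have hfu : ∀ θ, f θ (u θ) = 1 := by
    intro θ
    simp [hfapp, hu, map_add, map_smul, hφb]
    nlinarith [sin_sq_add_cos_sq θ]
  have hfy : ∀ θ, f θ (y θ) = 0 := by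
    intro θ
    simp [hfapp, hy, map_add, map_smul, hφb]
    ring
  have hy0 : ∀ θ, y θ ≠ 0 := by
    intro θ h
    have h1 : φ 1 (y θ) = cos θ := by simp [hy, map_add, map_smul, hφb]
    have h0 : φ 0 (y θ) = -sin θ := by simp [hy, map_add, map_smul, hφb]
    rw [h] at h1 h0
    simp at h1 h0
    nlinarith [sin_sq_add_cos_sq θ]
  have hfneg : ∀ θ z, f (θ + π) z = -f θ z := by
    intro θ z
    simp [hfapp, cos_add_pi, sin_add_pi]
    ring
  have hfper : ∀ θ z, f (θ + 2 * π) z = f θ z := by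
    intro θ z
    simp [hfapp, cos_add_two_pi, sin_add_two_pi]
  have hK0' : (0 : X) ∈ K := interior_subset hK0
  clear_value b φ f u y
  -- existence of maximizers
  have hexists : ∀ θ : ℝ, ∃ z ∈ K, IsMaxOn (f θ) K z := fun θ =>
    hKc.exists_isMaxOn ⟨0, hK0'⟩ (hfcont θ).continuousOn
  choose m hmK hmmax using hexists
  -- from an interior point one can increase f θ
  have hpush : ∀ θ (w : X), w ∈ interior K → ∃ ε : ℝ, 0 < ε ∧ w + ε • u θ ∈ K := by
    intro θ w hw
    have hcont : ContinuousAt (fun ε : ℝ => w + ε • u θ) 0 := by fun_prop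
    have hmem : interior K ∈ 𝓝 ((fun ε : ℝ => w + ε • u θ) 0) := by
      simpa using isOpen_interior.mem_nhds hw
    have hev : ∀ᶠ ε in 𝓝 (0 : ℝ), w + ε • u θ ∈ interior K := hcont.eventually_mem hmem
    have hev' : ∀ᶠ ε in 𝓝[>] (0 : ℝ), w + ε • u θ ∈ interior K :=
      nhdsWithin_le_nhds hev
    obtain ⟨ε, hε1, hε2⟩ := (hev'.and self_mem_nhdsWithin).exists
    exact ⟨ε, hε2, interior_subset hε1⟩
  -- uniqueness of the maximizer
  have huniq : ∀ θ (z : X), z ∈ K → IsMaxOn (f θ) K z → z = m θ := by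
    intro θ z hz hmax
    by_contra hne
    have hval : f θ z = f θ (m θ) := le_antisymm (hmmax θ hz) (hmax (hmK θ))
    have hmid : (1/2 : ℝ) • z + (1/2 : ℝ) • m θ ∈ interior K := by
      apply hKsc hz (hmK θ) hne (by norm_num) (by norm_num) (by norm_num)
    obtain ⟨ε, hεpos, hεK⟩ := hpush θ _ hmid
    have hle := hmmax θ hεK
    have : f θ ((1/2 : ℝ) • z + (1/2 : ℝ) • m θ + ε • u θ)
        = f θ (m θ) + ε := by
      rw [map_add, map_add, map_smul, map_smul, map_smul, hfu]
      simp [smul_eq_mul, hval]; ring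
    simp only [Set.mem_setOf_eq] at hle
    rw [this] at hle
    linarith
  -- the max value is positive
  have hMpos : ∀ θ, 0 < f θ (m θ) := by
    intro θ
    obtain ⟨ε, hεpos, hεK⟩ := hpush θ 0 hK0
    have hle := hmmax θ hεK
    simp only [Set.mem_setOf_eq] at hle
    have : f θ ((0 : X) + ε • u θ) = ε := by
      rw [map_add, map_smul, hfu]; simp
    rw [this] at hle
    linarith
  -- continuity of the maximizer map
  have hjoint : Continuous (fun p : ℝ × X => f p.1 p.2) := by
    have : (fun p : ℝ × X => f p.1 p.2)
        = fun p : ℝ × X => cos p.1 * φ 0 p.2 + sin p.1 * φ 1 p.2 := by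
      funext p; exact hfapp p.1 p.2
    rw [this]
    exact ((continuous_cos.comp continuous_fst).mul
      ((hφcont 0).comp continuous_snd)).add
      ((continuous_sin.comp continuous_fst).mul ((hφcont 1).comp continuous_snd))
  have hmcont : Continuous m := by
    rw [continuous_iff_continuousAt]
    intro θ
    apply tendsto_of_subseq_tendsto
    intro ns hns
    obtain ⟨a, haK, ms, hms, hlim⟩ := hKc.tendsto_subseq (fun n => hmK (ns n))
    have hθlim : Tendsto (fun n => ns (ms n)) atTop (𝓝 θ) := hns.comp hms.tendsto_atTop
    have hfa : ∀ w ∈ K, f θ w ≤ f θ a := by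
      intro w hw
      have h1 : Tendsto (fun n => f (ns (ms n)) (m (ns (ms n)))) atTop (𝓝 (f θ a)) := by
        have := hjoint.continuousAt (x := (θ, a))
        exact this.tendsto.comp (hθlim.prodMk_nhds hlim)
      have h2 : Tendsto (fun n => f (ns (ms n)) w) atTop (𝓝 (f θ w)) := by
        have := hjoint.continuousAt (x := (θ, w))
        exact this.tendsto.comp (hθlim.prodMk_nhds tendsto_const_nhds)
      refine le_of_tendsto_of_tendsto h2 h1 (Eventually.of_forall fun n => ?_)
      exact hmmax _ hw
    have ha : a = m θ := huniq θ a haK hfa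
    exact ⟨ms, ha ▸ hlim⟩
  -- periodicity of m
  have hmper : m (2 * π) = m 0 := by
    refine (huniq 0 (m (2 * π)) (hmK _) ?_).symm ▸ rfl
    intro w hw
    have h1 := hmmax (0 + 2 * π) hw
    simp only [Set.mem_setOf_eq] at h1 ⊢
    rw [hfper 0 w] at h1
    calc f 0 w ≤ f (0 + 2 * π) (m (0 + 2 * π)) := h1
      _ = f 0 (m (0 + 2 * π)) := hfper 0 _
      _ = f 0 (m (2 * π)) := by norm_num
  -- the cross product function
  set c : ℝ → ℝ := fun θ => φ 0 (m θ) * φ 1 (m (θ + π)) - φ 1 (m θ) * φ 0 (m (θ + π))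
    with hc
  have hccont : Continuous c := by
    apply Continuous.sub
    · exact ((hφcont 0).comp hmcont).mul
        ((hφcont 1).comp (hmcont.comp (continuous_id.add continuous_const)))
    · exact ((hφcont 1).comp hmcont).mul
        ((hφcont 0).comp (hmcont.comp (continuous_id.add continuous_const)))
  have hcpi : c π = -c 0 := by
    have : π + π = 2 * π := by ring
    simp only [hc, this, hmper, zero_add]
    ring
  -- IVT gives a zero of c
  have h0mem : (0 : ℝ) ∈ uIcc (c 0) (c π) := by
    rw [hcpi, Set.mem_uIcc]
    rcases le_total (c 0) 0 with h | h
    · left; exact ⟨h, by linarith⟩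
    · right; exact ⟨by linarith, h⟩
  obtain ⟨θ₀, hθ₀mem, hθ₀⟩ := intermediate_value_uIcc hccont.continuousOn h0mem
  -- set x := m θ₀, w := m (θ₀ + π)
  set x := m θ₀ with hxdef
  set w := m (θ₀ + π) with hwdef
  have hfx : 0 < f θ₀ x := hMpos θ₀
  have hfw : f θ₀ w < 0 := by
    have := hMpos (θ₀ + π)
    have h2 := hfneg θ₀ w
    linarith
  -- reconstruction from coordinates
  have hrepr : ∀ z : X, (φ 0 z) • b 0 + (φ 1 z) • b 1 = z := by
    intro z
    have := b.sum_repr z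
    rw [Fin.sum_univ_two] at this
    simpa [hφ, Module.Basis.coord_apply] using this
  -- from c θ₀ = 0, w is a negative multiple of x
  have hcross : φ 0 x * φ 1 w = φ 1 x * φ 0 w := by
    have := hθ₀
    simp only [hc] at this
    linarith
  have hxne0 : x ≠ 0 := by
    intro h
    rw [h, map_zero] at hfx
    exact lt_irrefl _ hfx
  have hcoordx : φ 0 x ≠ 0 ∨ φ 1 x ≠ 0 := by
    by_contra h
    push_neg at h
    have : f θ₀ x = 0 := by rw [hfapp, h.1, h.2]; ring
    rw [this] at hfx
    exact lt_irrefl _ hfx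
  obtain ⟨s, hws⟩ : ∃ s : ℝ, w = s • x := by
    rcases hcoordx with h | h
    · refine ⟨φ 0 w / φ 0 x, ?_⟩
      have h1 : φ 1 w = (φ 0 w / φ 0 x) * φ 1 x := by
        field_simp
        linarith [hcross]
      have h0 : φ 0 w = (φ 0 w / φ 0 x) * φ 0 x := by field_simp
      calc w = (φ 0 w) • b 0 + (φ 1 w) • b 1 := (hrepr w).symm
        _ = ((φ 0 w / φ 0 x) * φ 0 x) • b 0 + ((φ 0 w / φ 0 x) * φ 1 x) • b 1 := by
            rw [← h0, ← h1]
        _ = (φ 0 w / φ 0 x) • ((φ 0 x) • b 0 + (φ 1 x) • b 1) := by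
            rw [smul_add, smul_smul, smul_smul]
        _ = (φ 0 w / φ 0 x) • x := by rw [hrepr]
    · refine ⟨φ 1 w / φ 1 x, ?_⟩
      have h0 : φ 0 w = (φ 1 w / φ 1 x) * φ 0 x := by
        field_simp
        linarith [hcross]
      have h1 : φ 1 w = (φ 1 w / φ 1 x) * φ 1 x := by field_simp
      calc w = (φ 0 w) • b 0 + (φ 1 w) • b 1 := (hrepr w).symm
        _ = ((φ 1 w / φ 1 x) * φ 0 x) • b 0 + ((φ 1 w / φ 1 x) * φ 1 x) • b 1 := by
            rw [← h0, ← h1]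
        _ = (φ 1 w / φ 1 x) • ((φ 0 x) • b 0 + (φ 1 x) • b 1) := by
            rw [smul_add, smul_smul, smul_smul]
        _ = (φ 1 w / φ 1 x) • x := by rw [hrepr]
  have hsneg : s < 0 := by
    have : f θ₀ w = s * f θ₀ x := by rw [hws, map_smul, smul_eq_mul]
    nlinarith
  -- the general orthogonality lemma
  have hKnhds : K ∈ 𝓝 (0 : X) := mem_interior_iff_mem_nhds.mp hK0
  have horth : ∀ θ (v : X), v ≠ 0 → f θ v = 0 → BirkhoffOrth (gauge K) (m θ) v := by
    intro θ v hv hfv t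
    by_contra hlt
    push_neg at hlt
    have h1 : gauge K (m θ) ≤ 1 := gauge_le_one_of_mem (hmK θ)
    have h2 : m θ + t • v ∈ K := by
      apply gauge_lt_one_subset_self hKconv hK0' (absorbent_nhds_zero hKnhds)
      exact Set.mem_setOf_eq ▸ lt_of_lt_of_le hlt h1
    have h3 : IsMaxOn (f θ) K (m θ + t • v) := by
      intro z hz
      simp only [Set.mem_setOf_eq, map_add, map_smul, hfv, smul_eq_mul, mul_zero, add_zero]
      exact hmmax θ hz
    have heq := huniq θ _ h2 h3
    have htv : t • v = 0 := by
      have := heq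
      rwa [add_eq_left] at this
    rcases smul_eq_zero.mp htv with h | h
    · rw [h, zero_smul, add_zero] at hlt
      exact lt_irrefl _ hlt
    · exact hv h
  -- assemble the answer
  refine ⟨x, y θ₀, hxne0, hy0 θ₀, horth θ₀ (y θ₀) (hy0 θ₀) (hfy θ₀), ?_⟩
  have hworth : BirkhoffOrth (gauge K) w (y θ₀) := by
    apply horth (θ₀ + π) (y θ₀) (hy0 θ₀)
    rw [hfneg, hfy, neg_zero]
  have hpos : 0 < (-s)⁻¹ := inv_pos.mpr (by linarith)
  have hx' : (-s)⁻¹ • w = -x := by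
    rw [hws, smul_smul]
    have hs0 : s ≠ 0 := ne_of_lt hsneg
    have : (-s)⁻¹ * s = -1 := by field_simp
    rw [this, neg_one_smul]
  rw [← hx']
  exact birkhoffOrth_smul hpos hworth
end

section
/- Let (X, γ, ω) be a smooth gauge plane with unit disk K and dual gauge γ_ω, and suppose K_n → K in the Hausdorff metric with each K_n smooth and containing the origin in its interior. If x_n ∈ ∂K_n with x_n → x ∈ ∂K, and y_n is the unique vector with x_n ⊣_n y_n and ω(x_n, y_n) = 1 (orthogonality of the gauge with unit disk K_n), and y is the unique vector with x ⊣ y and ω(x,y) = 1, then y_n → y. -/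
open Filter Topology

open Metric Set Pointwise NNReal

section Aux

variable {X : Type*} [NormedAddCommGroup X] [NormedSpace ℝ X]

/-- If a closed convex set containing `0` δ-approximates the ball of radius `r` (δ < r/2),
then it contains the ball of radius `r/2`. -/
lemma aux_ball_subset [FiniteDimensional ℝ X] {C : Set X} {r δ : ℝ}
    (hC : Convex ℝ C) (hCcl : IsClosed C) (h0 : (0 : X) ∈ C)
    (hr : 0 < r) (hδ : δ < r / 2)
    (happ : ∀ a ∈ closedBall (0 : X) r, ∃ b ∈ C, dist a b ≤ δ) :
    closedBall (0 : X) (r / 2) ⊆ C := by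
  intro z hz
  by_contra hzC
  obtain ⟨f, u, hfu, hu⟩ := geometric_hahn_banach_closed_point hC hCcl hzC
  have hu0 : 0 < u := by simpa using hfu 0 h0
  obtain ⟨a, ha, hmax⟩ := (isCompact_closedBall (0 : X) r).exists_isMaxOn
    ⟨0, by simpa using hr.le⟩ f.continuous.continuousOn
  have hfa2 : 2 * f z ≤ f a := by
    have h2z : (2 : ℝ) • z ∈ closedBall (0 : X) r := by
      simp only [mem_closedBall, dist_zero_right] at hz ⊢
      rw [norm_smul]
      simp only [Real.norm_ofNat]
      linarith
    have := hmax h2z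
    simpa [map_smul] using this
  have hfapos : 0 < f a := by linarith
  have hbound : ∀ w : X, f w ≤ f a / r * ‖w‖ := by
    intro w
    rcases eq_or_ne w 0 with rfl | hw
    · simp
    · have hnw : 0 < ‖w‖ := norm_pos_iff.2 hw
      have hmem : (r / ‖w‖) • w ∈ closedBall (0 : X) r := by
        simp only [mem_closedBall, dist_zero_right, norm_smul, Real.norm_eq_abs,
          abs_of_pos (div_pos hr hnw)]
        rw [div_mul_cancel₀ _ hnw.ne']
      have h' : r / ‖w‖ * f w ≤ f a := by
        have := hmax hmem
        simpa [map_smul, smul_eq_mul] using this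
      calc f w = ‖w‖ / r * (r / ‖w‖ * f w) := by field_simp
        _ ≤ ‖w‖ / r * f a := mul_le_mul_of_nonneg_left h' (by positivity)
        _ = f a / r * ‖w‖ := by ring
  obtain ⟨b, hb, hab⟩ := happ a ha
  have h1 : f a - f b ≤ f a / r * δ := by
    have := hbound (a - b)
    have hd : ‖a - b‖ ≤ δ := by rwa [← dist_eq_norm]
    have hδ0 : 0 ≤ δ := dist_nonneg.trans hab
    calc f a - f b = f (a - b) := by rw [map_sub]
      _ ≤ f a / r * ‖a - b‖ := this
      _ ≤ f a / r * δ := by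
          apply mul_le_mul_of_nonneg_left hd (by positivity)
  have h2 : f b < u := hfu b hb
  -- f a < u + f a * δ / r, f a > 2 * f z > 2 * u, u > 0, δ < r/2, r > 0
  have h3 : f a < u + f a / r * δ := by linarith
  have h4 : 2 * u < f a := by linarith
  have hδ0 : 0 ≤ δ := dist_nonneg.trans hab
  have h5 : f a / r * δ < f a / r * (r / 2) :=
    mul_lt_mul_of_pos_left hδ (by positivity)
  have h6 : f a / r * (r / 2) = f a / 2 := by field_simp
  linarith

/-- Gauge comparison: if every point of `A` is δ-close to the convex set `K`
which contains the ball of radius `r`, then `gauge K ≤ (1 + δ/r) gauge A`. -/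
lemma aux_gauge_le {K A : Set X} {r δ : ℝ} (hr : 0 < r) (hδ : 0 < δ)
    (hK : Convex ℝ K) (hball : closedBall (0 : X) r ⊆ K)
    (hA : Absorbent ℝ A) (happ : ∀ a ∈ A, ∃ b ∈ K, dist a b ≤ δ) (z : X) :
    gauge K z ≤ (1 + δ / r) * gauge A z := by
  have hsub : A ⊆ ((1 + δ / r) • K : Set X) := by
    intro a ha
    obtain ⟨b, hb, hab⟩ := happ a ha
    have hmem : a - b ∈ ((δ / r) • K : Set X) := by
      refine ⟨(r / δ) • (a - b), hball ?_, ?_⟩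
      · simp only [mem_closedBall, dist_zero_right, norm_smul, Real.norm_eq_abs,
          abs_of_pos (div_pos hr hδ)]
        rw [div_mul_eq_mul_div, mul_comm, ← div_mul_eq_mul_div]
        calc ‖a - b‖ / δ * r ≤ 1 * r := by
              apply mul_le_mul_of_nonneg_right _ hr.le
              rw [div_le_one hδ, ← dist_eq_norm]
              exact hab
          _ = r := one_mul r
      · show (δ / r) • ((r / δ) • (a - b)) = a - b
        rw [smul_smul, div_mul_div_comm, mul_comm δ r, div_self (by positivity), one_smul]
    have hmem2 : a ∈ (K + (δ / r) • K : Set X) := ⟨b, hb, a - b, hmem, by module⟩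
    have heq : ((1 + δ / r) • K : Set X) = K + (δ / r) • K := by
      rw [hK.add_smul zero_le_one (by positivity), one_smul]
    rwa [heq]
  have h1 : gauge (((1 + δ / r) • K : Set X)) z ≤ gauge A z := gauge_mono hA hsub z
  have h2 : gauge (((1 + δ / r) • K : Set X)) z = (1 + δ / r)⁻¹ * gauge K z := by
    rw [gauge_smul_left_of_nonneg (by positivity : (0:ℝ) ≤ 1 + δ / r)]
    simp [smul_eq_mul]
  rw [h2] at h1
  have hpos : (0:ℝ) < 1 + δ / r := by positivity
  calc gauge K z = (1 + δ / r) * ((1 + δ / r)⁻¹ * gauge K z) := by field_simp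
    _ ≤ (1 + δ / r) * gauge A z := by
        apply mul_le_mul_of_nonneg_left h1 hpos.le

end Aux

section Conv

variable {X : Type*} [NormedAddCommGroup X] [NormedSpace ℝ X]

lemma aux_gauge_tendsto [FiniteDimensional ℝ X]
    {K : Set X} (hKc : IsCompact K) (hKconv : Convex ℝ K) (hK0 : (0 : X) ∈ interior K)
    {Kn : ℕ → Set X} (hKnc : ∀ n, IsCompact (Kn n)) (hKnconv : ∀ n, Convex ℝ (Kn n))
    (hKn0 : ∀ n, (0 : X) ∈ Kn n)
    (hH : Tendsto (fun n => Metric.hausdorffDist (Kn n) K) atTop (𝓝 0))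
    {z : ℕ → X} {z₀ : X} (hz : Tendsto z atTop (𝓝 z₀)) :
    Tendsto (fun n => gauge (Kn n) (z n)) atTop (𝓝 (gauge K z₀)) := by
  -- inner radius of K
  obtain ⟨r0, hr0, hball0⟩ := Metric.mem_nhds_iff.1 (mem_interior_iff_mem_nhds.1 hK0)
  set r := r0 / 2 with hrdef
  have hr : 0 < r := by positivity
  have hball : closedBall (0 : X) r ⊆ K :=
    (closedBall_subset_ball (by simp [hrdef]; linarith)).trans hball0
  have hKne : K.Nonempty := ⟨0, hball (by simp [hr.le])⟩
  have hAbsK : Absorbent ℝ K := absorbent_nhds_zero (mem_interior_iff_mem_nhds.1 hK0)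
  set G := gauge K z₀ with hGdef
  have hG0 : 0 ≤ G := gauge_nonneg _
  rw [Metric.tendsto_nhds]
  intro ε hε
  set δ := min (r / 4) (ε * r / (16 * (G + 1))) with hδdef
  have hδpos : 0 < δ := lt_min (by positivity) (by positivity)
  have hδr4 : δ ≤ r / 4 := min_le_left _ _
  have hδε : δ ≤ ε * r / (16 * (G + 1)) := min_le_right _ _
  have hev1 : ∀ᶠ n in atTop, Metric.hausdorffDist (Kn n) K < δ :=
    hH.eventually_lt_const hδpos
  have hev2 : ∀ᶠ n in atTop, dist (z n) z₀ < δ :=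
    (Metric.tendsto_nhds.1 hz) δ hδpos
  filter_upwards [hev1, hev2] with n hd hzn
  have hKnne : (Kn n).Nonempty := ⟨0, hKn0 n⟩
  have hfin : EMetric.hausdorffEdist (Kn n) K ≠ ⊤ :=
    Metric.hausdorffEdist_ne_top_of_nonempty_of_bounded hKnne hKne
      (hKnc n).isBounded hKc.isBounded
  have hfin' : EMetric.hausdorffEdist K (Kn n) ≠ ⊤ := by
    exact Metric.hausdorffEdist_ne_top_of_nonempty_of_bounded hKne hKnne
      hKc.isBounded (hKnc n).isBounded
  -- approximations
  have happ1 : ∀ a ∈ Kn n, ∃ b ∈ K, dist a b ≤ δ := by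
    intro a ha
    obtain ⟨b, hb, hab⟩ := hKc.exists_infDist_eq_dist hKne a
    exact ⟨b, hb, by
      rw [← hab]
      exact (Metric.infDist_le_hausdorffDist_of_mem ha hfin).trans hd.le⟩
  have happ2 : ∀ a ∈ K, ∃ b ∈ Kn n, dist a b ≤ δ := by
    intro a ha
    obtain ⟨b, hb, hab⟩ := (hKnc n).exists_infDist_eq_dist hKnne a
    refine ⟨b, hb, ?_⟩
    rw [← hab]
    refine (Metric.infDist_le_hausdorffDist_of_mem ha hfin').trans ?_
    rw [Metric.hausdorffDist_comm]
    exact hd.le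
  -- inner ball of Kn n
  have hballn : closedBall (0 : X) (r / 2) ⊆ Kn n :=
    aux_ball_subset (hKnconv n) (hKnc n).isClosed (hKn0 n) hr (by linarith)
      (fun a ha => happ2 a (hball ha))
  have hAbsKn : Absorbent ℝ (Kn n) :=
    (absorbent_ball_zero (by positivity : (0:ℝ) < r / 2)).mono
      (ball_subset_closedBall.trans hballn)
  -- gauge comparisons at z₀
  have hB1 : gauge (Kn n) z₀ ≤ (1 + δ / (r / 2)) * G :=
    aux_gauge_le (by positivity : (0:ℝ) < r / 2) hδpos (hKnconv n) hballn hAbsK happ2 z₀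
  have hB2 : G ≤ (1 + δ / r) * gauge (Kn n) z₀ :=
    aux_gauge_le hr hδpos hKconv hball hAbsKn happ1 z₀
  -- Lipschitz estimate
  have hrn0 : (0:ℝ) < r / 2 := by positivity
  have hLip : LipschitzWith (⟨r / 2, hrn0.le⟩ : ℝ≥0)⁻¹ (gauge (Kn n)) :=
    (hKnconv n).lipschitzWith_gauge (by exact_mod_cast hrn0)
      ((ball_subset_closedBall).trans hballn)
  have hLip' : dist (gauge (Kn n) (z n)) (gauge (Kn n) z₀) ≤ (2 / r) * dist (z n) z₀ := by
    have h := hLip.dist_le_mul (z n) z₀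
    have hc : (((⟨r / 2, hrn0.le⟩ : ℝ≥0)⁻¹ : ℝ≥0) : ℝ) = 2 / r := by
      exact (NNReal.coe_inv _).trans (inv_div r 2)
    rw [hc] at h
    exact h
  set d := δ / r with hddef
  have hd : 0 < d := by positivity
  have hd4 : d ≤ 1 / 4 := by
    rw [hddef, div_le_div_iff₀ hr (by norm_num)]
    linarith
  have hdε : 16 * d * (G + 1) ≤ ε := by
    have h1 : d ≤ ε / (16 * (G + 1)) := by
      rw [hddef]
      calc δ / r ≤ (ε * r / (16 * (G + 1))) / r := by gcongr
        _ = ε / (16 * (G + 1)) := by field_simp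
    have h2 : d * (16 * (G + 1)) ≤ ε := (le_div_iff₀ (by positivity)).1 h1
    calc 16 * d * (G + 1) = d * (16 * (G + 1)) := by ring
      _ ≤ ε := h2
  set gn := gauge (Kn n) (z n) with hgndef
  set g0 := gauge (Kn n) z₀ with hg0def
  have hg0nn : 0 ≤ g0 := gauge_nonneg _
  have hgnnn : 0 ≤ gn := gauge_nonneg _
  have habs : |gn - g0| ≤ 2 * d := by
    rw [← Real.dist_eq]
    calc dist gn g0 ≤ (2 / r) * dist (z n) z₀ := hLip'
      _ ≤ (2 / r) * δ := mul_le_mul_of_nonneg_left hzn.le (by positivity)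
      _ = 2 * d := by rw [hddef]; ring
  have hL1 : gn - g0 ≤ 2 * d := (abs_sub_le_iff.1 habs).1
  have hL2 : g0 - gn ≤ 2 * d := (abs_sub_le_iff.1 habs).2
  have hB1' : g0 ≤ (1 + 2 * d) * G := by
    have : δ / (r / 2) = 2 * d := by rw [hddef]; field_simp
    rw [← this]
    exact hB1
  have hB2' : G ≤ (1 + d) * g0 := by
    rw [hddef] at *
    exact hB2
  rw [Real.dist_eq, abs_lt]
  constructor
  · -- -ε < gn - G
    nlinarith [mul_le_mul_of_nonneg_left hB1' hd.le, mul_nonneg hd.le hG0,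
      mul_nonneg hd.le hg0nn, mul_nonneg (mul_nonneg hd.le hd.le) hG0]
  · nlinarith [mul_nonneg hd.le hG0]

end Conv

section Part2

variable {X : Type*} [NormedAddCommGroup X] [NormedSpace ℝ X]

/-- Birkhoff orthogonality at a frontier point yields a supporting line. -/
lemma aux_supportsAt {K : Set X} (hKconv : Convex ℝ K) (hK0 : (0 : X) ∈ interior K)
    {p v : X} (hp : p ∈ frontier K)
    (hb : ∀ t : ℝ, gauge K p ≤ gauge K (p + t • v)) :
    SupportsAt K p v := by
  have hnh : K ∈ 𝓝 (0 : X) := mem_interior_iff_mem_nhds.1 hK0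
  have hgp : gauge K p = 1 := (gauge_eq_one_iff_mem_frontier hKconv hnh).2 hp
  set L : Set X := Set.range (fun t : ℝ => p + t • v) with hLdef
  have hLconv : Convex ℝ L := by
    rintro _ ⟨s, rfl⟩ _ ⟨t, rfl⟩ a b ha hb hab
    refine ⟨a * s + b * t, ?_⟩
    have h : a • (p + s • v) + b • (p + t • v) = (a + b) • p + (a * s + b * t) • v := by
      module
    show p + (a * s + b * t) • v = a • (p + s • v) + b • (p + t • v)
    rw [h, hab, one_smul]
  have hdisj : Disjoint (interior K) L := by
    rw [Set.disjoint_left]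
    rintro w hw ⟨t, rfl⟩
    have h1 : gauge K (p + t • v) < 1 := interior_subset_gauge_lt_one K hw
    have h2 : (1:ℝ) ≤ gauge K (p + t • v) := hgp ▸ hb t
    linarith
  obtain ⟨f, u, hfu, hfL⟩ :=
    geometric_hahn_banach_open (hKconv.interior) isOpen_interior hLconv hdisj
  have hu0 : 0 < u := by simpa using hfu 0 hK0
  have hfv : f v = 0 := by
    by_contra hfv
    have h1 := hfL (p + ((u - 1 - f p) / f v) • v) ⟨_, rfl⟩
    rw [map_add, map_smul, smul_eq_mul, div_mul_cancel₀ _ hfv] at h1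
    linarith
  have hfp : u ≤ f p := by simpa using hfL p ⟨0, by simp⟩
  have hKle : ∀ z ∈ K, f z ≤ u := by
    intro z hz
    by_contra hzu
    push_neg at hzu
    have hfz0 : 0 < f z := lt_trans hu0 hzu
    set a := (f z - u) / (2 * f z) with hadef
    have ha0 : 0 < a := div_pos (by linarith) (by linarith)
    have ha1 : a < 1 := by
      rw [hadef, div_lt_one (by positivity)]
      linarith
    have hmem : a • (0:X) + (1 - a) • z ∈ interior K :=
      hKconv.combo_interior_closure_mem_interior hK0
        (subset_closure hz) ha0 (by linarith) (by ring)
    have := hfu _ hmem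
    rw [map_add, map_smul, map_smul] at this
    simp only [map_zero, smul_zero, smul_eq_mul, zero_add] at this
    -- (1 - a) * f z < u, but (1-a) * f z = (f z + u)/2 > u
    have heq : (1 - a) * f z = (f z + u) / 2 := by
      rw [hadef]
      field_simp
      ring
    rw [heq] at this
    linarith
  refine ⟨(f : X →ₗ[ℝ] ℝ), ?_, hfv, fun z hz => le_trans (hKle z hz) hfp⟩
  intro h0
  have : f p = 0 := by
    have := LinearMap.congr_fun h0 p
    simpa using this
  linarith

/-- In a 2-dimensional space with a nondegenerate alternating form, the kernel of `ω x`
is the span of `x`. -/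
lemma aux_omega_ker (hdim : Module.finrank ℝ X = 2)
    (ω : X →ₗ[ℝ] X →ₗ[ℝ] ℝ)
    (halt : ∀ x, ω x x = 0) (hnd : ∀ x, (∀ y, ω x y = 0) → x = 0)
    {x v : X} (hx : x ≠ 0) (hv : ω x v = 0) : ∃ c : ℝ, v = c • x := by
  haveI : FiniteDimensional ℝ X := FiniteDimensional.of_finrank_pos (by rw [hdim]; norm_num)
  by_contra hc
  push_neg at hc
  have hli : LinearIndependent ℝ ![x, v] := by
    rw [LinearIndependent.pair_iff' hx]
    intro a ha
    exact hc a ha.symm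
  have hspan : Submodule.span ℝ {x, v} = ⊤ := by
    apply Submodule.eq_top_of_finrank_eq
    have h1 : Set.range ![x, v] = {x, v} := by
      simp [Matrix.range_cons, Matrix.range_empty, Set.pair_comm]
    have := finrank_span_eq_card hli
    rw [h1] at this
    rw [this, hdim]
    simp
  have hzero : ∀ w, ω x w = 0 := by
    intro w
    have hw : w ∈ Submodule.span ℝ ({x, v} : Set X) := hspan ▸ Submodule.mem_top
    obtain ⟨a, b, rfl⟩ := Submodule.mem_span_pair.1 hw
    simp [map_add, map_smul, halt, hv]
  exact hx (hnd x hzero)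

/-- Uniqueness of the normalized Birkhoff-orthogonal vector for a smooth body. -/
lemma aux_unique (hdim : Module.finrank ℝ X = 2)
    (ω : X →ₗ[ℝ] X →ₗ[ℝ] ℝ)
    (halt : ∀ x, ω x x = 0) (hnd : ∀ x, (∀ y, ω x y = 0) → x = 0)
    {K : Set X} (hKconv : Convex ℝ K) (hK0 : (0 : X) ∈ interior K) (hKsm : SmoothBody K)
    {x y y' : X} (hx : x ∈ frontier K)
    (hby : BirkhoffOrth (gauge K) x y) (hωy : ω x y = 1)
    (hby' : BirkhoffOrth (gauge K) x y') (hωy' : ω x y' = 1) : y' = y := by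
  have hy0 : y ≠ 0 := fun h => by simp [h] at hωy
  have hy0' : y' ≠ 0 := fun h => by simp [h] at hωy'
  have hs1 : SupportsAt K x y := aux_supportsAt hKconv hK0 hx hby
  have hs2 : SupportsAt K x y' := aux_supportsAt hKconv hK0 hx hby'
  obtain ⟨c, hc⟩ := hKsm x hx y y' hy0 hy0' hs1 hs2
  have : ω x y' = c * ω x y := by rw [hc, map_smul, smul_eq_mul]
  rw [hωy, hωy', mul_one] at this
  rw [hc, ← this, one_smul]

end Part2

/-- Right continuity of orthogonality: if `Kₙ → K` in the Hausdorff metric,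
`xₙ ∈ ∂Kₙ` with `xₙ → x ∈ ∂K`, `xₙ ⊣ₙ yₙ` with `ω(xₙ,yₙ) = 1`, and `x ⊣ y`
with `ω(x,y) = 1`, then `yₙ → y`. -/
theorem stmt_19
    {X : Type*} [NormedAddCommGroup X] [NormedSpace ℝ X]
    (hdim : Module.finrank ℝ X = 2)
    (ω : X →ₗ[ℝ] X →ₗ[ℝ] ℝ)
    (halt : ∀ x, ω x x = 0) (hnd : ∀ x, (∀ y, ω x y = 0) → x = 0)
    (K : Set X) (hKc : IsCompact K) (hKconv : Convex ℝ K)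
    (hK0 : (0 : X) ∈ interior K) (hKsm : SmoothBody K)
    (Kn : ℕ → Set X)
    (hKnc : ∀ n, IsCompact (Kn n)) (hKnconv : ∀ n, Convex ℝ (Kn n))
    (hKn0 : ∀ n, (0 : X) ∈ interior (Kn n)) (hKnsm : ∀ n, SmoothBody (Kn n))
    (hH : Tendsto (fun n => Metric.hausdorffDist (Kn n) K) atTop (𝓝 0))
    (xn : ℕ → X) (hxn : ∀ n, xn n ∈ frontier (Kn n))
    (x : X) (hx : x ∈ frontier K) (hxconv : Tendsto xn atTop (𝓝 x))
    (yn : ℕ → X)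
    (hyn : ∀ n, BirkhoffOrth (gauge (Kn n)) (xn n) (yn n) ∧ ω (xn n) (yn n) = 1)
    (y : X) (hy : BirkhoffOrth (gauge K) x y ∧ ω x y = 1) :
    Tendsto yn atTop (𝓝 y) := by
  haveI : FiniteDimensional ℝ X := FiniteDimensional.of_finrank_pos (by rw [hdim]; norm_num)
  -- continuity of the bilinear form
  have hωcont : ∀ (u v : ℕ → X) (a b : X), Tendsto u atTop (𝓝 a) → Tendsto v atTop (𝓝 b) →
      Tendsto (fun n => ω (u n) (v n)) atTop (𝓝 (ω a b)) := by
    intro u v a b hu hv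
    have hΩ : Continuous fun p : X × X => ω p.1 p.2 := by
      let Ω : X →ₗ[ℝ] X →L[ℝ] ℝ :=
        { toFun := fun w => LinearMap.toContinuousLinearMap (ω w)
          map_add' := by
            intro a b
            ext z
            simp
          map_smul' := by
            intro c a
            ext z
            simp }
      have hΩc : Continuous Ω := Ω.continuous_of_finiteDimensional
      have heq : (fun p : X × X => ω p.1 p.2) = fun p : X × X => (Ω p.1) p.2 := rfl
      rw [heq]
      exact isBoundedBilinearMap_apply.continuous.comp
        ((hΩc.comp continuous_fst).prodMk continuous_snd)
    exact (hΩ.tendsto (a, b)).comp (hu.prodMk_nhds hv)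
  -- x is nonzero and gauge K x is positive
  have hAbsK : Absorbent ℝ K := absorbent_nhds_zero (mem_interior_iff_mem_nhds.1 hK0)
  have hx0 : x ≠ 0 := by
    intro h
    exact hx.2 (by rw [h]; exact hK0)
  obtain ⟨R, hR⟩ := hKc.isBounded.subset_closedBall (0 : X)
  have hgx : 0 < gauge K x := by
    have h1 : ‖x‖ / max R 1 ≤ gauge K x :=
      le_gauge_of_subset_closedBall hAbsK (le_trans zero_le_one (le_max_right R 1))
        (hR.trans (Metric.closedBall_subset_closedBall (le_max_left R 1)))
    have h2 : 0 < ‖x‖ / max R 1 :=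
      div_pos (norm_pos_iff.2 hx0) (lt_of_lt_of_le one_pos (le_max_right R 1))
    linarith
  -- gauge convergence along any subsequence
  have hgconv : ∀ σ : ℕ → ℕ, Tendsto σ atTop atTop → ∀ (z : ℕ → X) (z₀ : X),
      Tendsto z atTop (𝓝 z₀) →
      Tendsto (fun k => gauge (Kn (σ k)) (z k)) atTop (𝓝 (gauge K z₀)) := by
    intro σ hσ z z₀ hz
    exact aux_gauge_tendsto hKc hKconv hK0 (fun k => hKnc (σ k)) (fun k => hKnconv (σ k))
      (fun k => interior_subset (hKn0 (σ k))) (hH.comp hσ) hz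
  -- the sequence yn is bounded
  have hbdd : ∃ C : ℝ, ∀ n, ‖yn n‖ ≤ C := by
    by_contra hCC
    push_neg at hCC
    have hfreq : ∀ m : ℕ, ∃ᶠ k in atTop, (m : ℝ) < ‖yn k‖ := by
      intro m
      rw [Filter.frequently_atTop]
      intro N
      obtain ⟨n, hn⟩ := hCC ((m : ℝ) + ∑ i ∈ Finset.range N, ‖yn i‖)
      have hsum0 : (0:ℝ) ≤ ∑ i ∈ Finset.range N, ‖yn i‖ :=
        Finset.sum_nonneg fun i _ => norm_nonneg _
      refine ⟨n, ?_, by linarith⟩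
      by_contra hnN
      push_neg at hnN
      have h1 : ‖yn n‖ ≤ ∑ i ∈ Finset.range N, ‖yn i‖ :=
        Finset.single_le_sum (fun i _ => norm_nonneg (yn i)) (Finset.mem_range.2 hnN)
      have h2 : (0:ℝ) ≤ (m : ℝ) := Nat.cast_nonneg m
      linarith
    obtain ⟨φ, hφ, hφbig⟩ := Filter.extraction_forall_of_frequently hfreq
    have hynφpos : ∀ m, 0 < ‖yn (φ m)‖ :=
      fun m => lt_of_le_of_lt (Nat.cast_nonneg m) (hφbig m)
    set u : ℕ → X := fun m => ‖yn (φ m)‖⁻¹ • yn (φ m) with hu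
    have hunorm : ∀ m, ‖u m‖ = 1 := by
      intro m
      rw [hu]
      simp only
      rw [norm_smul, norm_inv, norm_norm, inv_mul_cancel₀ (hynφpos m).ne']
    have humem : ∀ m, u m ∈ Metric.closedBall (0 : X) 1 :=
      fun m => Metric.mem_closedBall.2 (by rw [dist_zero_right, hunorm m])
    obtain ⟨v, _, ψ, hψ, huv⟩ :=
      tendsto_subseq_of_bounded Metric.isBounded_closedBall humem
    have hvnorm : ‖v‖ = 1 := by
      have h1 : Tendsto (fun k => ‖(u ∘ ψ) k‖) atTop (𝓝 ‖v‖) :=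
        (continuous_norm.tendsto v).comp huv
      have h2 : (fun k => ‖(u ∘ ψ) k‖) = fun _ => (1 : ℝ) := funext fun k => hunorm (ψ k)
      rw [h2] at h1
      exact tendsto_nhds_unique h1 tendsto_const_nhds
    set σ : ℕ → ℕ := φ ∘ ψ with hσdef
    have hσ : Tendsto σ atTop atTop := (hφ.comp hψ).tendsto_atTop
    have hnorminf : Tendsto (fun k => ‖yn (σ k)‖) atTop atTop := by
      apply tendsto_atTop_mono (fun k => (hφbig (ψ k)).le)
      exact tendsto_natCast_atTop_atTop.comp hψ.tendsto_atTop
    have hinv0 : Tendsto (fun k => ‖yn (σ k)‖⁻¹) atTop (𝓝 0) :=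
      tendsto_inv_atTop_zero.comp hnorminf
    have hxσ : Tendsto (fun k => xn (σ k)) atTop (𝓝 x) := hxconv.comp hσ
    have hω1 : Tendsto (fun k => ω (xn (σ k)) ((u ∘ ψ) k)) atTop (𝓝 (ω x v)) :=
      hωcont _ _ _ _ hxσ huv
    have hω2 : (fun k => ω (xn (σ k)) ((u ∘ ψ) k)) = fun k => ‖yn (σ k)‖⁻¹ := by
      funext k
      show ω (xn (σ k)) (‖yn (φ (ψ k))‖⁻¹ • yn (φ (ψ k))) = ‖yn (σ k)‖⁻¹
      rw [map_smul, smul_eq_mul]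
      have : ω (xn (σ k)) (yn (σ k)) = 1 := (hyn (σ k)).2
      rw [show φ (ψ k) = σ k from rfl, this, mul_one]
    rw [hω2] at hω1
    have hωxv : ω x v = 0 := tendsto_nhds_unique hω1 hinv0
    obtain ⟨c, hc⟩ := aux_omega_ker hdim ω halt hnd hx0 hωxv
    have hc0 : c ≠ 0 := by
      rintro rfl
      rw [zero_smul] at hc
      rw [hc, norm_zero] at hvnorm
      exact one_ne_zero hvnorm.symm
    have hbk : ∀ s : ℝ, gauge K x ≤ gauge K (x + s • v) := by
      intro s
      have hz : Tendsto (fun k => xn (σ k) + s • (u ∘ ψ) k) atTop (𝓝 (x + s • v)) :=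
        hxσ.add (huv.const_smul s)
      have h1 := hgconv σ hσ _ _ hz
      have h2 := hgconv σ hσ _ _ hxσ
      refine le_of_tendsto_of_tendsto h2 h1 (Filter.Eventually.of_forall fun k => ?_)
      have hB := (hyn (σ k)).1 (s * ‖yn (σ k)‖⁻¹)
      have heq : xn (σ k) + (s * ‖yn (σ k)‖⁻¹) • yn (σ k) = xn (σ k) + s • (u ∘ ψ) k := by
        show _ = xn (σ k) + s • (‖yn (φ (ψ k))‖⁻¹ • yn (φ (ψ k)))
        rw [show φ (ψ k) = σ k from rfl, mul_smul]
      rwa [heq] at hB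
    have hcontra := hbk (-c⁻¹)
    rw [hc, smul_smul] at hcontra
    have h0 : -c⁻¹ * c = -1 := by field_simp
    rw [h0, neg_one_smul, add_neg_cancel, gauge_zero] at hcontra
    linarith
  obtain ⟨C, hC⟩ := hbdd
  -- main convergence via subsequences
  apply tendsto_of_subseq_tendsto
  intro ns hns
  have hmem : ∀ k, (yn ∘ ns) k ∈ Metric.closedBall (0 : X) C :=
    fun k => Metric.mem_closedBall.2 (by rw [dist_zero_right]; exact hC (ns k))
  obtain ⟨y', _, ms, hms, hyc⟩ :=
    tendsto_subseq_of_bounded Metric.isBounded_closedBall hmem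
  set σ : ℕ → ℕ := ns ∘ ms with hσdef
  have hσ : Tendsto σ atTop atTop := hns.comp hms.tendsto_atTop
  have hxσ : Tendsto (fun k => xn (σ k)) atTop (𝓝 x) := hxconv.comp hσ
  have hycσ : Tendsto (fun k => yn (σ k)) atTop (𝓝 y') := hyc
  have hω : ω x y' = 1 := by
    have h1 : Tendsto (fun k => ω (xn (σ k)) (yn (σ k))) atTop (𝓝 (ω x y')) :=
      hωcont _ _ _ _ hxσ hycσ
    have h2 : (fun k => ω (xn (σ k)) (yn (σ k))) = fun _ => (1 : ℝ) :=
      funext fun k => (hyn (σ k)).2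
    rw [h2] at h1
    exact tendsto_nhds_unique h1 tendsto_const_nhds
  have hbk : BirkhoffOrth (gauge K) x y' := by
    intro t
    have hz : Tendsto (fun k => xn (σ k) + t • yn (σ k)) atTop (𝓝 (x + t • y')) :=
      hxσ.add (hycσ.const_smul t)
    have h1 := hgconv σ hσ _ _ hz
    have h2 := hgconv σ hσ _ _ hxσ
    exact le_of_tendsto_of_tendsto h2 h1
      (Filter.Eventually.of_forall fun k => (hyn (σ k)).1 t)
  have hyy : y' = y := aux_unique hdim ω halt hnd hKconv hK0 hKsm hx hy.1 hy.2 hbk hω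
  exact ⟨ms, hyy ▸ hyc⟩
end
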